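/- Let V be a real topological vector space and E a subset of its topological dual V′. If the support functional s_E(x) := sup_{α∈E} (−α(x)) is bounded above on some nonempty open subset of V, then E contains no nontrivial affine line: whenever α₀, β ∈ V′ satisfy α₀ + t·β ∈ E for every t ∈ ℝ, one has β = 0. -/

import Mathlib

/-- If the support functional `s_E(x) = sup_{α ∈ E} (-α x)` of a set `E`
of continuous linear functionals on a real topological vector space `V` is bounded
above on some nonempty open subset of `V`, then `E` contains no nontrivial affine line. -/
theorem semiEquicontinuous_no_affine_line
    {V : Type*} [AddCommGroup V] [Module ℝ V] [TopologicalSpace V]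
    [IsTopologicalAddGroup V] [ContinuousSMul ℝ V]
    (E : Set (V →L[ℝ] ℝ))
    (hE : ∃ U : Set V, IsOpen U ∧ U.Nonempty ∧ ∃ C : ℝ, ∀ x ∈ U, ∀ α ∈ E, -α x ≤ C)
    (α₀ β : V →L[ℝ] ℝ) (hline : ∀ t : ℝ, α₀ + t • β ∈ E) :
    β = 0 := by
  by_contra hβ
  obtain ⟨U, hU, ⟨x₀, hx₀⟩, C, hC⟩ := hE
  -- find v with β v ≠ 0
  obtain ⟨v, hv⟩ : ∃ v, β v ≠ 0 := by
    by_contra h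
    push_neg at h
    exact hβ (ContinuousLinearMap.ext fun x => by simp [h x])
  -- find x ∈ U with β x ≠ 0
  obtain ⟨x, hxU, hβx⟩ : ∃ x ∈ U, β x ≠ 0 := by
    by_cases h0 : β x₀ ≠ 0
    · exact ⟨x₀, hx₀, h0⟩
    push_neg at h0
    -- continuity of s ↦ x₀ + s • v
    have hcont : Continuous fun s : ℝ => x₀ + s • v :=
      continuous_const.add (continuous_id.smul continuous_const)
    have hopen : IsOpen ((fun s : ℝ => x₀ + s • v) ⁻¹' U) := hU.preimage hcont
    have h0mem : (0 : ℝ) ∈ (fun s : ℝ => x₀ + s • v) ⁻¹' U := by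
      simp [hx₀]
    obtain ⟨ε, hε, hball⟩ := Metric.isOpen_iff.mp hopen 0 h0mem
    refine ⟨x₀ + (ε / 2) • v, hball ?_, ?_⟩
    · simp [Real.dist_eq, abs_of_pos, hε, half_lt_self hε]
    · simp [h0, hv, ne_of_gt hε]
  -- for all t, t * β x ≤ C + α₀ x
  have key : ∀ t : ℝ, t * β x ≤ C + α₀ x := by
    intro t
    have := hC x hxU _ (hline (-t))
    simp only [ContinuousLinearMap.add_apply, ContinuousLinearMap.smul_apply,
      smul_eq_mul] at this
    linarith
  rcases lt_or_gt_of_ne hβx with h | h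
  · have := key ((C + α₀ x + 1) / β x)
    rw [div_mul_cancel₀ _ hβx] at this
    linarith
  · have := key ((C + α₀ x + 1) / β x)
    rw [div_mul_cancel₀ _ hβx] at this
    linarith
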